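/- For n = 2, every countable group G embeds into a 2-generated group H, μ : G → H, such that (i) two elements of μ(G) are conjugate in H if and only if their preimages are conjugate in G, and (ii) an element of μ(G) is a square in H if and only if its preimage is a square in G. -/

import Mathlib

namespace Stmt15

open SemidirectProduct Function

variable (K : Type) [Group K]

/-- Shift action of `ℤ` on `ℤ → K`. -/
def sh : Multiplicative ℤ →* MulAut (ℤ → K) where
  toFun q :=
    { toFun := fun f z => f (z - q.toAdd)
      invFun := fun f z => f (z + q.toAdd)
      left_inv := fun f => funext fun z => by simp
      right_inv := fun f => funext fun z => by simp
      map_mul' := fun f g => rfl }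
  map_one' := by
    ext f z
    show f (z - Multiplicative.toAdd 1) = f z
    simp
  map_mul' := fun q r => by
    ext f z
    show f (z - Multiplicative.toAdd (q * r)) = f (z - Multiplicative.toAdd q - Multiplicative.toAdd r)
    simp [sub_sub]

abbrev Wr : Type := SemidirectProduct (ℤ → K) (Multiplicative ℤ) (sh K)

@[simp] lemma sh_apply (q : Multiplicative ℤ) (f : ℤ → K) (z : ℤ) :
    sh K q f z = f (z - q.toAdd) := rfl

/-- The embedding of `K` at coordinate 0. -/
def ι : K →* Wr K := inl.comp (MonoidHom.mulSingle (fun _ : ℤ => K) 0)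

lemma ι_def (a : K) : ι K a = inl (Pi.mulSingle 0 a) := rfl

@[simp] lemma ι_left (a : K) : (ι K a).left = Pi.mulSingle 0 a := rfl
@[simp] lemma ι_right (a : K) : (ι K a).right = 1 := rfl

lemma ι_injective : Injective (ι K) := fun a b hab =>
  Pi.mulSingle_injective (M := fun _ : ℤ => K) 0 (inl_injective hab)

variable {K}

theorem sq_lemma (a : K) (c : Wr K) (h : ι K a = c ^ 2) : ∃ d : K, a = d ^ 2 := by
  rw [pow_two] at h
  have hr := congrArg SemidirectProduct.right h
  simp only [mul_right, ι_right] at hr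
  have hq : c.right = 1 := by
    have h2 : c.right.toAdd + c.right.toAdd = 0 := by
      have := congrArg Multiplicative.toAdd hr
      simpa using this.symm
    have h3 : c.right.toAdd = 0 := by omega
    have := congrArg Multiplicative.ofAdd h3
    simpa using this
  have hl := congrArg SemidirectProduct.left h
  simp only [mul_left, ι_left, hq, map_one, MulAut.one_apply] at hl
  refine ⟨c.left 0, ?_⟩
  have := congrFun hl 0
  simpa [pow_two] using this

theorem conj_lemma (a b : K) (x : Wr K) (h : x * ι K a * x⁻¹ = ι K b) :
    ∃ g : K, g * a * g⁻¹ = b := by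
  have h' : x * ι K a = ι K b * x := by rw [← h, inv_mul_cancel_right]
  have hl := congrArg SemidirectProduct.left h'
  simp only [mul_left, ι_left, ι_right, map_one, MulAut.one_apply] at hl
  set n := x.right.toAdd with hn
  have key : ∀ z : ℤ, x.left z * (Pi.mulSingle 0 a : ℤ → K) (z - n) =
      (Pi.mulSingle 0 b : ℤ → K) z * x.left z := fun z => by
    have := congrFun hl z
    simpa using this
  by_cases h0 : n = 0
  · refine ⟨x.left 0, ?_⟩
    have hz := key 0
    rw [h0] at hz
    simp at hz
    rw [mul_inv_eq_iff_eq_mul]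
    exact hz
  · have ha : a = 1 := by
      have hz := key n
      simp [Pi.mulSingle_apply, h0] at hz
      exact hz
    have hb : b = 1 := by
      have hz := key 0
      rw [ha] at hz
      simp at hz
      exact hz
    exact ⟨1, by simp [ha, hb]⟩

end Stmt15

namespace Stmt15

open SemidirectProduct Function
open scoped commutatorElement

section Construction

variable {G : Type} [Group G] (σ : ℕ → G)

/-- positions encoding the enumeration -/
def e (n : ℕ) : ℤ := 3 ^ (n + 1)

lemma e_pos (n : ℕ) : 0 < e n := by unfold e; positivity

lemma e_inj : Injective e := by
  intro i j h
  have h' : (3:ℤ) ^ (i+1) = 3 ^ (j+1) := h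
  have : ((3 ^ (i+1) : ℕ) : ℤ) = ((3 ^ (j+1) : ℕ) : ℤ) := by push_cast; exact h'
  have := Nat.pow_right_injective (by norm_num) (Nat.cast_injective this)
  omega

lemma e_add_e (i n l : ℕ) : e i + e n ≠ e l := by
  intro h
  have hodd : Odd (3:ℤ) := ⟨1, by norm_num⟩
  have h1 : Odd (e i) := by unfold e; exact hodd.pow
  have h2 : Odd (e n) := by unfold e; exact hodd.pow
  have h3 : Odd (e l) := by unfold e; exact hodd.pow
  have h4 : Even (e i + e n) := h1.add_odd h2
  rw [h] at h4
  exact (Int.not_odd_iff_even.mpr h4) h3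

/-- the values along positions -/
noncomputable def A : ℤ → G := extend e σ (fun _ => 1)

lemma A_e (n : ℕ) : A σ (e n) = σ n := e_inj.extend_apply σ _ n

lemma A_not {k : ℤ} (hk : ¬ ∃ n, e n = k) : A σ k = 1 := extend_apply' _ _ _ hk

/-- step functions -/
noncomputable def hfun (k : ℤ) : ℤ → G := fun z => if 0 ≤ z then A σ k else 1

lemma hfun_one {k : ℤ} (hk : A σ k = 1) : hfun σ k = 1 := by
  funext z; simp [hfun, hk]

noncomputable def Ffun : ℤ → Wr G := fun k =>
  if k = 0 then inr (Multiplicative.ofAdd 1) else inl (hfun σ k)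

noncomputable def tt (G : Type) [Group G] : Wr (Wr G) := inr (Multiplicative.ofAdd 1)

noncomputable def uu : Wr (Wr G) := inl (Ffun σ)

noncomputable def μemb (G : Type) [Group G] : G →* Wr (Wr G) := (ι (Wr G)).comp (ι G)

lemma μemb_inj : Injective (μemb G) := (ι_injective (Wr G)).comp (ι_injective G)

lemma tt_zpow (m : ℤ) : (tt G) ^ m = inr (Multiplicative.ofAdd m) := by
  rw [tt, ← map_zpow]
  congr 1
  rw [← Multiplicative.toAdd.injective.eq_iff]
  simp

lemma comm_inl_inr (K : Type) [Group K] (p : ℤ → K) (q : Multiplicative ℤ) :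
    ⁅(inl p : Wr K), (inr q : Wr K)⁆ = inl (p * sh K q p⁻¹) := by
  have h1 : (inl p : Wr K)⁻¹ = inl p⁻¹ := (map_inv inl p).symm
  have h2 : ((inr q : Wr K))⁻¹ = inr q⁻¹ := (map_inv inr q).symm
  rw [commutatorElement_def, h1, h2, mul_assoc (inl p), mul_assoc (inl p), ← inl_aut, ← map_mul]

/-- The key identity: the commutator word equals the embedded generator. -/
lemma key_word (n : ℕ) :
    ⁅(tt G) ^ (-(e n)) * uu σ * (tt G) ^ (e n), uu σ⁆ = μemb G (σ n) := by
  set m := e n with hm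
  have hmpos : 0 < m := e_pos n
  -- step 1 : the conjugate is `inl` of the shifted function
  have step1 : (tt G) ^ (-m) * uu σ * (tt G) ^ m = inl (fun k => Ffun σ (k + m)) := by
    rw [tt_zpow, tt_zpow, uu]
    have : (inr (Multiplicative.ofAdd m) : Wr (Wr G)) = (inr (Multiplicative.ofAdd (-m)))⁻¹ := by
      rw [← map_inv]; congr 1; simp
    rw [this, ← map_inv, ← inl_aut]
    congr 1
    funext k
    show Ffun σ (k - Multiplicative.toAdd (Multiplicative.ofAdd (-m))) = Ffun σ (k + m)
    simp [sub_neg_eq_add]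
  rw [step1, uu, ← map_commutatorElement]
  have key : (⁅(fun k => Ffun σ (k + m)), Ffun σ⁆ : ℤ → Wr G)
      = (Pi.mulSingle 0 (ι G (σ n)) : ℤ → Wr G) := by
    funext k
    have hcomm : (⁅(fun k => Ffun σ (k + m)), Ffun σ⁆ : ℤ → Wr G) k = ⁅Ffun σ (k + m), Ffun σ k⁆ := rfl
    rw [hcomm]
    by_cases hk : k = 0
    · -- main spot
      subst hk
      have hm0 : (0:ℤ) + m ≠ 0 := by omega
      have hF1 : Ffun σ (0 + m) = inl (hfun σ m) := by
        rw [Ffun, if_neg hm0]; norm_num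
      have hF2 : Ffun σ 0 = inr (Multiplicative.ofAdd 1) := by rw [Ffun, if_pos rfl]
      rw [hF1, hF2, comm_inl_inr]
      have : (hfun σ m * sh G (Multiplicative.ofAdd 1) (hfun σ m)⁻¹ : ℤ → G)
          = Pi.mulSingle 0 (σ n) := by
        funext z
        show hfun σ m z * (hfun σ m)⁻¹ (z - 1) = _
        by_cases h1 : (0:ℤ) ≤ z
        · by_cases h2 : (0:ℤ) ≤ z - 1
          · have hz0 : z ≠ 0 := by omega
            simp [hfun, h1, h2, hz0, Pi.mulSingle_apply, show (1:ℤ) ≤ z by omega]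
          · have hz0 : z = 0 := by omega
            subst hz0
            simp [hfun, h1, h2, Pi.mulSingle_apply, hm, A_e]
        · have h2 : ¬ (0:ℤ) ≤ z - 1 := by omega
          have hz0 : z ≠ 0 := by omega
          simp [hfun, h1, h2, hz0, Pi.mulSingle_apply, show ¬ (1:ℤ) ≤ z by omega]
      rw [this]
      simp [ι_def, Pi.mulSingle_apply]
    · -- other spots vanish
      rw [show (Pi.mulSingle 0 (ι G (σ n)) : ℤ → Wr G) k = if k = 0 then ι G (σ n) else 1 from Pi.mulSingle_apply .., if_neg hk]
      by_cases hkm : k + m = 0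
      · -- k = -m : the left entry is trivial
        have : Ffun σ k = 1 := by
          rw [Ffun, if_neg hk, hfun_one]
          · exact map_one inl
          · apply A_not
            rintro ⟨n', hn'⟩
            have := e_pos n'
            omega
        rw [this, commutatorElement_one_right]
      · -- both entries are `inl` of step functions, one of which is trivial
        have hF1 : Ffun σ (k + m) = inl (hfun σ (k + m)) := by rw [Ffun, if_neg hkm]
        have hF2 : Ffun σ k = inl (hfun σ k) := by rw [Ffun, if_neg hk]
        rw [hF1, hF2, ← map_commutatorElement]
        have : A σ k = 1 ∨ A σ (k + m) = 1 := by
          by_cases h1 : ∃ i, e i = k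
          · by_cases h2 : ∃ l, e l = k + m
            · obtain ⟨i, hi⟩ := h1
              obtain ⟨l, hl⟩ := h2
              exfalso
              exact e_add_e i n l (by rw [hi, ← hm, hl])
            · exact Or.inr (A_not σ h2)
          · exact Or.inl (A_not σ h1)
        rcases this with h | h
        · rw [hfun_one σ h, commutatorElement_one_right, map_one]
        · rw [hfun_one σ h]
          have : ⁅(1 : ℤ → G), hfun σ k⁆ = 1 := commutatorElement_one_left _
          rw [this, map_one]
  rw [key]
  rfl

end Construction

end Stmt15



/-- An embedding `μ : G → H` of `G` into a 2-generated group `H` preserving conjugacy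
and squares. -/
structure ConjSquarePreservingEmbedding (G : Type) [Group G] where
  H : Type
  [grp : Group H]
  h₁ : H
  h₂ : H
  μ : G →* H
  gen : Subgroup.closure {h₁, h₂} = ⊤
  inj : Function.Injective μ
  /-- Two elements of `μ(G)` are conjugate in `H` iff their preimages are conjugate in `G`. -/
  conj : ∀ a b : G, (∃ t : H, t * μ a * t⁻¹ = μ b) ↔ ∃ t : G, t * a * t⁻¹ = b
  /-- An element of `μ(G)` is a square in `H` iff its preimage is a square in `G`. -/
  sq : ∀ a : G, (∃ c : H, μ a = c ^ 2) ↔ ∃ c : G, a = c ^ 2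

set_option maxHeartbeats 400000 in
/-- Theorem 1 with n = 2: every countable group `G` embeds into a
2-generated group `H` preserving conjugacy and squares. -/
theorem stmt_15 (G : Type) [Group G] [Countable G] :
    Nonempty (ConjSquarePreservingEmbedding G) := by
  classical
  obtain ⟨σ, hσ⟩ := exists_surjective_nat G
  let Hsub : Subgroup (Stmt15.Wr (Stmt15.Wr G)) :=
    Subgroup.closure {Stmt15.tt G, Stmt15.uu σ}
  have ht : Stmt15.tt G ∈ Hsub := Subgroup.subset_closure (Set.mem_insert _ _)
  have hu : Stmt15.uu σ ∈ Hsub :=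
    Subgroup.subset_closure (Set.mem_insert_of_mem _ rfl)
  have hmem : ∀ a : G, Stmt15.μemb G a ∈ Hsub := by
    intro a
    obtain ⟨n, rfl⟩ := hσ a
    rw [← Stmt15.key_word σ n, commutatorElement_def]
    exact mul_mem (mul_mem (mul_mem (mul_mem (mul_mem (zpow_mem ht _) hu) (zpow_mem ht _)) hu)
      (inv_mem (mul_mem (mul_mem (zpow_mem ht _) hu) (zpow_mem ht _)))) (inv_mem hu)
  let μ' : G →* ↥Hsub := (Stmt15.μemb G).codRestrict Hsub hmem
  refine ⟨{ H := ↥Hsub, grp := inferInstance, h₁ := ⟨Stmt15.tt G, ht⟩,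
            h₂ := ⟨Stmt15.uu σ, hu⟩, μ := μ', gen := ?_, inj := ?_, conj := ?_, sq := ?_ }⟩
  · -- generation
    have hset : ((Subtype.val ⁻¹' ({Stmt15.tt G, Stmt15.uu σ} :
        Set (Stmt15.Wr (Stmt15.Wr G)))) : Set ↥Hsub)
        = {⟨Stmt15.tt G, ht⟩, ⟨Stmt15.uu σ, hu⟩} := by
      ext y
      simp [Set.mem_preimage, Subtype.ext_iff]
    rw [← hset]
    exact Subgroup.closure_closure_coe_preimage
  · -- injectivity
    intro a b h
    exact Stmt15.μemb_inj (congrArg Subtype.val h)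
  · -- conjugacy
    intro a b
    constructor
    · rintro ⟨⟨x, hx⟩, hxe⟩
      have hW : x * Stmt15.μemb G a * x⁻¹ = Stmt15.μemb G b := congrArg Subtype.val hxe
      obtain ⟨g1, hg1⟩ := Stmt15.conj_lemma (Stmt15.ι G a) (Stmt15.ι G b) x hW
      obtain ⟨g, hg⟩ := Stmt15.conj_lemma a b g1 hg1
      exact ⟨g, hg⟩
    · rintro ⟨s, rfl⟩
      exact ⟨μ' s, by rw [← map_inv, ← map_mul, ← map_mul]⟩
  · -- squares
    intro a
    constructor
    · rintro ⟨⟨c, hc⟩, hce⟩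
      have hW : Stmt15.μemb G a = c ^ 2 := congrArg Subtype.val hce
      obtain ⟨d1, hd1⟩ := Stmt15.sq_lemma (Stmt15.ι G a) c hW
      obtain ⟨d, hd⟩ := Stmt15.sq_lemma a d1 hd1
      exact ⟨d, hd⟩
    · rintro ⟨c, rfl⟩
      exact ⟨μ' c, by rw [map_pow]⟩
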